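/- In the worst-case lower-bound MDP with T : ℝ^{k+2} → ℝ^{k+2} as above, if U ∈ ℝ^{k+2} satisfies U_1 = 0 and U_{k+2} = 0, then (TU - U)_2 + γ⁻¹ (TU - U)_3 + γ⁻² (TU - U)_4 + ⋯ + γ^{-k} (TU - U)_{k+2} = 1, and consequently (∑_{i=0}^k γ^{-i}) max_j |(TU - U)_j| ≥ 1. -/

import Mathlib

theorem stmt_14 (k : ℕ) (γ : ℝ) (hγ0 : 0 < γ) (hγ1 : γ ≤ 1)
    (T : (Fin (k+2) → ℝ) → (Fin (k+2) → ℝ))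
    (hT : ∀ (U : Fin (k+2) → ℝ) (j : Fin (k+2)),
      T U j = if j.1 = 0 then γ * U 0
              else if j.1 = 1 then 1 + γ * U 0
              else γ * U ⟨j.1 - 1, lt_of_le_of_lt (Nat.sub_le _ _) j.isLt⟩)
    (U : Fin (k+2) → ℝ)
    (h1 : U 0 = 0) (h2 : U ⟨k+1, Nat.lt_succ_self _⟩ = 0) :
    (∑ m : Fin (k+1), (γ^(m:ℕ))⁻¹ * ((T U - U) m.succ)) = 1 ∧
    1 ≤ (∑ i ∈ Finset.range (k+1), (γ^i)⁻¹) * ‖T U - U‖ := by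
  have hγ : γ ≠ 0 := ne_of_gt hγ0
  have hsum : (∑ m : Fin (k+1), (γ^(m:ℕ))⁻¹ * ((T U - U) m.succ)) = 1 := by
    set V : ℕ → ℝ := fun i => if h : i < k+2 then U ⟨i, h⟩ else 0 with hV
    have hV0 : V 0 = 0 := by simp [hV, h1]
    have hVk : V (k+1) = 0 := by simp [hV, h2]
    have hVapp : ∀ (i : ℕ) (h : i < k+2), U ⟨i, h⟩ = V i := by
      intro i h; simp [hV, h]
    set g : ℕ → ℝ := fun i => γ^(1 - (i:ℤ)) * V i with hg
    rw [Fin.sum_univ_succ]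
    have h0 : (γ^((0 : Fin (k+1)):ℕ))⁻¹ * ((T U - U) (0 : Fin (k+1)).succ)
        = 1 - V 1 := by
      have : ((0 : Fin (k+1)).succ : Fin (k+2)).1 = 1 := rfl
      rw [Pi.sub_apply, hT]
      simp only [this]
      have hU1 : U 1 = V 1 := by
        rw [show (1 : Fin (k+2)) = ⟨1, by omega⟩ by ext; simp]
        exact hVapp _ _
      norm_num [h1, hU1]
    rw [h0]
    have hterm : ∀ m : Fin k,
        (γ^((m.succ : Fin (k+1)):ℕ))⁻¹ * ((T U - U) (m.succ).succ)
          = g ((m:ℕ)+1) - g ((m:ℕ)+2) := by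
      intro m
      have hv : ((m.succ : Fin (k+1)).succ : Fin (k+2)).1 = (m:ℕ) + 2 := rfl
      rw [Pi.sub_apply, hT]
      simp only [hv]
      rw [if_neg (by omega), if_neg (by omega)]
      have e1 : U ⟨(m:ℕ)+2-1, by omega⟩ = V ((m:ℕ)+1) := hVapp _ _
      have e2 : U ((m.succ : Fin (k+1)).succ) = V ((m:ℕ)+2) := by
        have : ((m.succ : Fin (k+1)).succ : Fin (k+2)) = ⟨(m:ℕ)+2, by omega⟩ :=
          Fin.ext hv
        rw [this]; exact hVapp _ _
      rw [e1, e2]; simp only [hg]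
      have c1 : γ ^ (1 - (((m:ℕ)+1 : ℕ) : ℤ)) = (γ^((m:ℕ)+1))⁻¹ * γ := by
        push_cast
        rw [show (1 : ℤ) - ((m:ℕ)+1) = -(((m:ℕ)+1 : ℕ) : ℤ) + 1 by push_cast; ring,
          zpow_add₀ hγ, zpow_neg, zpow_natCast, zpow_one]
      have c2 : γ ^ (1 - (((m:ℕ)+2 : ℕ) : ℤ)) = (γ^((m:ℕ)+1))⁻¹ := by
        rw [show (1 : ℤ) - (((m:ℕ)+2 : ℕ)) = -(((m:ℕ)+1 : ℕ) : ℤ) by push_cast; ring,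
          zpow_neg, zpow_natCast]
      have hms : ((m.succ : Fin (k+1)) : ℕ) = (m:ℕ)+1 := rfl
      rw [hms, c1, c2]
      ring
    rw [Finset.sum_congr rfl (fun m _ => hterm m)]
    have htel : (∑ m : Fin k, (g ((m:ℕ)+1) - g ((m:ℕ)+2))) = g 1 - g (k+1) := by
      rw [Fin.sum_univ_eq_sum_range (fun i => g (i+1) - g (i+2))]
      exact Finset.sum_range_sub' (fun i => g (i+1)) k
    rw [htel, hg]
    simp only [hVk, mul_zero, sub_zero]
    have : γ ^ (1 - ((1:ℕ):ℤ)) = 1 := by norm_num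
    rw [this]
    ring
  refine ⟨hsum, ?_⟩
  calc (1:ℝ) = ∑ m : Fin (k+1), (γ^(m:ℕ))⁻¹ * ((T U - U) m.succ) := hsum.symm
    _ ≤ ∑ m : Fin (k+1), (γ^(m:ℕ))⁻¹ * ‖T U - U‖ := by
        apply Finset.sum_le_sum
        intro m _
        apply mul_le_mul_of_nonneg_left _ (by positivity)
        calc (T U - U) m.succ ≤ |(T U - U) m.succ| := le_abs_self _
          _ = ‖(T U - U) m.succ‖ := (Real.norm_eq_abs _).symm
          _ ≤ ‖T U - U‖ := norm_le_pi_norm _ _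
    _ = (∑ i ∈ Finset.range (k+1), (γ^i)⁻¹) * ‖T U - U‖ := by
        rw [← Finset.sum_mul, Fin.sum_univ_eq_sum_range (fun i => (γ^i)⁻¹)]
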